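/- arXiv:1412.2326 — 6 statements merged into one kernel-verified Lean document; each statement's English description precedes it below -/
import Mathlib

section
/- If α > βqN, then x'(t) is strictly monotonically decreasing on [0, ∞). -/
open Real Filter Set


theorem stmt_8 (N α β q τ : ℝ) (hN : 0 < N) (hα : 0 < α) (hβ : 0 < β) (hq : 0 < q)
    (hτ : τ = α + β * q * N)
    (g x : ℝ → ℝ)
    (hg : ∀ t, g t = (α / (β * q * N)) * Real.exp (τ * t))
    (hx : ∀ t, x t = (q * N * g t - α / β) / (g t + 1))
    (hcase : α > β * q * N) :
    StrictAntiOn (deriv x) (Ici (0 : ℝ)) := by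
  have hβqN : 0 < β * q * N := by positivity
  have hτpos : 0 < τ := by rw [hτ]; positivity
  have hc : 1 < α / (β * q * N) := (one_lt_div hβqN).2 hcase
  have hgpos : ∀ t, 0 < g t := by
    intro t; rw [hg t]; positivity
  have hg1 : ∀ t, 0 ≤ t → 1 < g t := by
    intro t ht
    rw [hg t]
    have h1 : 1 ≤ Real.exp (τ * t) := Real.one_le_exp (by positivity)
    nlinarith
  have hgne : ∀ t, g t + 1 ≠ 0 := fun t => by nlinarith [hgpos t]
  have hg' : ∀ t, HasDerivAt g (τ * g t) t := by
    intro t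
    have h2 := (((hasDerivAt_id t).const_mul τ).exp).const_mul (α / (β * q * N))
    simp only [id_eq] at h2
    have h : HasDerivAt (fun s => (α / (β * q * N)) * Real.exp (τ * s)) (τ * g t) t := by
      refine h2.congr_deriv ?_
      rw [hg t]; ring
    exact h.congr_of_eventuallyEq (Eventually.of_forall fun s => hg s)
  set F : ℝ → ℝ := fun t => τ * (q * N + α / β) * g t / (g t + 1) ^ 2 with hF
  have hx' : ∀ t, HasDerivAt x (F t) t := by
    intro t
    have hnum : HasDerivAt (fun s => q * N * g s - α / β) (q * N * (τ * g t)) t :=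
      ((hg' t).const_mul (q * N)).sub_const _
    have hden : HasDerivAt (fun s => g s + 1) (τ * g t) t := (hg' t).add_const 1
    have h := hnum.div hden (hgne t)
    have heq : (q * N * (τ * g t) * (g t + 1) - (q * N * g t - α / β) * (τ * g t)) /
        (g t + 1) ^ 2 = F t := by
      rw [hF]
      field_simp
      ring
    rw [heq] at h
    exact h.congr_of_eventuallyEq (Eventually.of_forall fun s => hx s)
  have hderiv : deriv x = F := funext fun t => (hx' t).deriv
  rw [hderiv]
  have hF' : ∀ t, HasDerivAt F
      ((τ * (q * N + α / β) * (τ * g t) * ((g t + 1) ^ 2) -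
        τ * (q * N + α / β) * g t * (2 * (g t + 1) * (τ * g t))) / ((g t + 1) ^ 2) ^ 2) t := by
    intro t
    have h1 : HasDerivAt (fun s => τ * (q * N + α / β) * g s)
        (τ * (q * N + α / β) * (τ * g t)) t := (hg' t).const_mul _
    have h2 : HasDerivAt (fun s => (g s + 1) ^ 2) (2 * (g t + 1) * (τ * g t)) t := by
      have := ((hg' t).add_const 1).pow 2
      simp at this
      exact this
    exact h1.div h2 (pow_ne_zero 2 (hgne t))
  apply strictAntiOn_of_deriv_neg (convex_Ici 0)
  · exact fun t _ => ((hF' t).continuousAt).continuousWithinAt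
  · intro t ht
    rw [interior_Ici] at ht
    rw [(hF' t).deriv]
    have hg1t := hg1 t ht.le
    have hgp := hgpos t
    have hA : 0 < τ * (q * N + α / β) := by positivity
    apply div_neg_of_neg_of_pos
    · nlinarith [mul_pos hA hgp, mul_pos (mul_pos hA hgp) hτpos,
        mul_pos (mul_pos (mul_pos hA hgp) hτpos) (hgpos t)]
    · positivity
end

section
/- If α > (2+√3)·βqN, then x'(t) is convex on [0, ∞) (i.e., x'''(t) > 0 for all t > 0). -/
open Real Filter Set


theorem stmt_9 (N α β q τ : ℝ) (hN : 0 < N) (hα : 0 < α) (hβ : 0 < β) (hq : 0 < q)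
    (hτ : τ = α + β * q * N)
    (g x : ℝ → ℝ)
    (hg : ∀ t, g t = (α / (β * q * N)) * Real.exp (τ * t))
    (hx : ∀ t, x t = (q * N * g t - α / β) / (g t + 1))
    (hcase : α > (2 + Real.sqrt 3) * (β * q * N)) :
    ConvexOn ℝ (Ici (0 : ℝ)) (deriv x) ∧
    ∀ t : ℝ, 0 < t → 0 < deriv (deriv (deriv x)) t := by
  have hτ0 : 0 < τ := by rw [hτ]; positivity
  have hbqN : 0 < β * q * N := by positivity
  set A := α / (β * q * N) with hAdef
  set C := α / β with hCdef
  have hA0 : 0 < A := by positivity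
  have hC0 : 0 < C := by positivity
  have hA3 : 2 + Real.sqrt 3 < A := by
    rw [hAdef, lt_div_iff₀ hbqN]; linarith [hcase]
  -- closed form for x
  have hxfun : x = fun t => (C * Real.exp (τ * t) - C) / (A * Real.exp (τ * t) + 1) := by
    funext t
    rw [hx t, hg t]
    have h1 : q * N * (A * Real.exp (τ * t)) - α / β = C * Real.exp (τ * t) - C := by
      rw [hAdef, hCdef]; field_simp
    rw [h1]
  have hEpos : ∀ t : ℝ, 0 < Real.exp (τ * t) := fun t => Real.exp_pos _
  have hden : ∀ t : ℝ, 0 < A * Real.exp (τ * t) + 1 := by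
    intro t; have := hEpos t; nlinarith
  have hdne : ∀ t : ℝ, A * Real.exp (τ * t) + 1 ≠ 0 := fun t => ne_of_gt (hden t)
  have hE : ∀ t : ℝ, HasDerivAt (fun s => Real.exp (τ * s)) (τ * Real.exp (τ * t)) t := by
    intro t
    have := (Real.hasDerivAt_exp (τ * t)).comp t ((hasDerivAt_id t).const_mul τ)
    exact this.congr_deriv (by ring)
  set f1 : ℝ → ℝ := fun t => C * (A + 1) * τ * Real.exp (τ * t) / (A * Real.exp (τ * t) + 1) ^ 2 with hf1def
  set f2 : ℝ → ℝ := fun t =>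
    C * (A + 1) * τ ^ 2 * (Real.exp (τ * t) * (1 - A * Real.exp (τ * t))) /
      (A * Real.exp (τ * t) + 1) ^ 3 with hf2def
  set f3 : ℝ → ℝ := fun t =>
    C * (A + 1) * τ ^ 3 *
        (Real.exp (τ * t) * (A ^ 2 * Real.exp (τ * t) ^ 2 - 4 * A * Real.exp (τ * t) + 1)) /
      (A * Real.exp (τ * t) + 1) ^ 4 with hf3def
  have hDx : ∀ t : ℝ, HasDerivAt x (f1 t) t := by
    intro t
    rw [hxfun]
    have hnum : HasDerivAt (fun s => C * Real.exp (τ * s) - C) (C * (τ * Real.exp (τ * t))) t :=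
      ((hE t).const_mul C).sub_const C
    have hd : HasDerivAt (fun s => A * Real.exp (τ * s) + 1) (A * (τ * Real.exp (τ * t))) t :=
      ((hE t).const_mul A).add_const 1
    have := hnum.div hd (hdne t)
    refine this.congr_deriv ?_
    rw [hf1def]
    have h := hdne t
    field_simp
    ring
  have hDf1 : ∀ t : ℝ, HasDerivAt f1 (f2 t) t := by
    intro t
    have hnum : HasDerivAt (fun s => C * (A + 1) * τ * Real.exp (τ * s))
        (C * (A + 1) * τ * (τ * Real.exp (τ * t))) t := (hE t).const_mul _
    have hd0 : HasDerivAt (fun s => A * Real.exp (τ * s) + 1) (A * (τ * Real.exp (τ * t))) t :=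
      ((hE t).const_mul A).add_const 1
    have hd : HasDerivAt (fun s => (A * Real.exp (τ * s) + 1) ^ 2)
        (2 * (A * Real.exp (τ * t) + 1) ^ 1 * (A * (τ * Real.exp (τ * t)))) t := hd0.pow 2
    have hne : (A * Real.exp (τ * t) + 1) ^ 2 ≠ 0 := pow_ne_zero _ (hdne t)
    have := hnum.div hd hne
    refine this.congr_deriv ?_
    rw [hf2def]
    have h := hdne t
    field_simp
    ring
  have hDf2 : ∀ t : ℝ, HasDerivAt f2 (f3 t) t := by
    intro t
    have hnum : HasDerivAt
        (fun s => C * (A + 1) * τ ^ 2 * (Real.exp (τ * s) * (1 - A * Real.exp (τ * s))))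
        (C * (A + 1) * τ ^ 2 *
          (τ * Real.exp (τ * t) * (1 - A * Real.exp (τ * t)) +
            Real.exp (τ * t) * (-(A * (τ * Real.exp (τ * t)))))) t := by
      have h1 : HasDerivAt (fun s => 1 - A * Real.exp (τ * s)) (-(A * (τ * Real.exp (τ * t)))) t :=
        (((hE t).const_mul A).const_sub 1)
      exact ((hE t).mul h1).const_mul _
    have hd0 : HasDerivAt (fun s => A * Real.exp (τ * s) + 1) (A * (τ * Real.exp (τ * t))) t :=
      ((hE t).const_mul A).add_const 1
    have hd : HasDerivAt (fun s => (A * Real.exp (τ * s) + 1) ^ 3)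
        (3 * (A * Real.exp (τ * t) + 1) ^ 2 * (A * (τ * Real.exp (τ * t)))) t := hd0.pow 3
    have hne : (A * Real.exp (τ * t) + 1) ^ 3 ≠ 0 := pow_ne_zero _ (hdne t)
    have := hnum.div hd hne
    refine this.congr_deriv ?_
    rw [hf3def]
    have h := hdne t
    field_simp
    ring
  have hderivx : deriv x = f1 := funext fun t => (hDx t).deriv
  have hderivf1 : deriv f1 = f2 := funext fun t => (hDf1 t).deriv
  have hderivf2 : deriv f2 = f3 := funext fun t => (hDf2 t).deriv
  -- positivity of f3 on nonnegative times
  have hsq3 : Real.sqrt 3 ^ 2 = 3 := Real.sq_sqrt (by norm_num)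
  have hf3pos : ∀ t : ℝ, 0 ≤ t → 0 < f3 t := by
    intro t ht
    have hE1 : (1 : ℝ) ≤ Real.exp (τ * t) := Real.one_le_exp (by positivity)
    have hAE : 2 + Real.sqrt 3 < A * Real.exp (τ * t) := by nlinarith
    have hpoly : 0 < A ^ 2 * Real.exp (τ * t) ^ 2 - 4 * A * Real.exp (τ * t) + 1 := by
      have hs := Real.sqrt_nonneg 3
      nlinarith [sq_nonneg (A * Real.exp (τ * t) - 2 - Real.sqrt 3)]
    rw [hf3def]
    have := hEpos t
    have := hden t
    positivity
  constructor
  · rw [hderivx]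
    have hdiff1 : Differentiable ℝ f1 := fun t => (hDf1 t).differentiableAt
    have hdiff2 : Differentiable ℝ f2 := fun t => (hDf2 t).differentiableAt
    apply MonotoneOn.convexOn_of_deriv (convex_Ici 0) hdiff1.continuous.continuousOn
      hdiff1.differentiableOn
    rw [hderivf1, interior_Ici]
    have hmono : StrictMonoOn f2 (Ici (0 : ℝ)) := by
      apply strictMonoOn_of_deriv_pos (convex_Ici 0) hdiff2.continuous.continuousOn
      intro t ht
      rw [interior_Ici] at ht
      rw [hderivf2]
      exact hf3pos t ht.le
    exact hmono.monotoneOn.mono Ioi_subset_Ici_self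
  · intro t ht
    rw [hderivx, hderivf1, hderivf2]
    exact hf3pos t ht.le
end

section
/- If βqN < α < (2+√3)·βqN, then with t₁ = (1/τ)·ln((2+√3)βqN/α) we have t₁ > 0, x'''(t) < 0 on (0, t₁), and x'''(t) > 0 on (t₁, ∞); i.e., x' decreases concavely then convexly. -/
open Real Filter Set


set_option maxHeartbeats 1600000 in
theorem stmt_10 (N α β q τ : ℝ) (hN : 0 < N) (hα : 0 < α) (hβ : 0 < β) (hq : 0 < q)
    (hτ : τ = α + β * q * N)
    (g x : ℝ → ℝ)
    (hg : ∀ t, g t = (α / (β * q * N)) * Real.exp (τ * t))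
    (hx : ∀ t, x t = (q * N * g t - α / β) / (g t + 1))
    (hlo : β * q * N < α) (hhi : α < (2 + Real.sqrt 3) * (β * q * N))
    (t₁ : ℝ) (ht₁ : t₁ = (1 / τ) * Real.log ((2 + Real.sqrt 3) * (β * q * N) / α)) :
    0 < t₁ ∧
    (∀ t : ℝ, t ∈ Ioo 0 t₁ → deriv (deriv (deriv x)) t < 0) ∧
    (∀ t : ℝ, t₁ < t → 0 < deriv (deriv (deriv x)) t) := by
  have hβqN : 0 < β * q * N := by positivity
  have hτ0 : 0 < τ := by rw [hτ]; linarith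
  have hs : Real.sqrt 3 ^ 2 = 3 := Real.sq_sqrt (by norm_num)
  have hs0 : 0 ≤ Real.sqrt 3 := Real.sqrt_nonneg 3
  have hs1 : 1 < Real.sqrt 3 := by nlinarith
  set c := α / (β * q * N) with hc
  have hc0 : 0 < c := by positivity
  have hc1 : 1 < c := (one_lt_div hβqN).2 hlo
  have hcu : c < 2 + Real.sqrt 3 := (div_lt_iff₀ hβqN).2 hhi
  set u : ℝ → ℝ := fun t => c * Real.exp (τ * t) with hu
  have hupos : ∀ t, 0 < u t := fun t => by positivity
  have hu1 : ∀ t, u t + 1 ≠ 0 := fun t => by nlinarith [hupos t]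
  have hud : ∀ t, HasDerivAt u (τ * u t) t := by
    intro t
    have h1 : HasDerivAt (fun s : ℝ => τ * s) τ t := by
      simpa using (hasDerivAt_id t).const_mul τ
    have h2 := (Real.hasDerivAt_exp (τ * t)).comp t h1
    have h3 := h2.const_mul c
    refine h3.congr_deriv ?_
    simp [hu]; ring
  -- rewrite x in a nicer form
  have xE : x = fun t => q * N - (τ / β) * (u t + 1)⁻¹ := by
    funext t
    rw [hx t]
    have hgu : g t = u t := hg t
    rw [hgu, hτ]
    have h1 := hu1 t
    field_simp
    ring
  -- first derivative
  set D1 : ℝ → ℝ := fun t => (τ ^ 2 / β) * (u t / (u t + 1) ^ 2) with hD1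
  have hX1 : ∀ t, HasDerivAt x (D1 t) t := by
    intro t
    rw [xE]
    have h := (((hud t).add_const 1).inv (hu1 t)).const_mul (τ / β)
    have h2 := h.const_sub (q * N)
    refine (h2.congr_deriv ?_)
    have h1 := hu1 t
    simp only [hD1]
    field_simp [hD1]
  have hd1 : deriv x = D1 := funext fun t => (hX1 t).deriv
  -- second derivative
  set D2 : ℝ → ℝ := fun t => (τ ^ 3 / β) * (u t * (1 - u t) / (u t + 1) ^ 3) with hD2
  have hX2 : ∀ t, HasDerivAt D1 (D2 t) t := by
    intro t
    have hden : (u t + 1) ^ 2 ≠ 0 := pow_ne_zero _ (hu1 t)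
    have h := ((hud t).div (((hud t).add_const 1).pow 2) hden).const_mul (τ ^ 2 / β)
    refine (h.congr_deriv ?_)
    have h1 := hu1 t
    simp only [hD1, hD2, Pi.pow_apply]
    field_simp [hD1, hD2]
    ring
  have hd2 : deriv D1 = D2 := funext fun t => (hX2 t).deriv
  -- third derivative
  set D3 : ℝ → ℝ := fun t =>
    (τ ^ 4 / β) * (u t * (u t ^ 2 - 4 * u t + 1) / (u t + 1) ^ 4) with hD3
  have hX3 : ∀ t, HasDerivAt D2 (D3 t) t := by
    intro t
    have hden : (u t + 1) ^ 3 ≠ 0 := pow_ne_zero _ (hu1 t)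
    have hnum : HasDerivAt (fun s => u s * (1 - u s))
        (τ * u t * (1 - u t) + u t * (-(τ * u t))) t :=
      (hud t).mul ((hud t).const_sub 1)
    have h := (hnum.div (((hud t).add_const 1).pow 3) hden).const_mul (τ ^ 3 / β)
    refine (h.congr_deriv ?_)
    have h1 := hu1 t
    simp only [hD2, hD3, Pi.pow_apply]
    field_simp [hD2, hD3]
    ring
  have hd3 : deriv (deriv (deriv x)) = D3 := by
    rw [hd1, hd2]
    exact funext fun t => (hX3 t).deriv
  -- t₁ facts
  have hratio : (2 + Real.sqrt 3) * (β * q * N) / α = (2 + Real.sqrt 3) / c := by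
    rw [hc]; field_simp
  have ht1v : τ * t₁ = Real.log ((2 + Real.sqrt 3) / c) := by
    rw [ht₁, hratio]; field_simp
  have hrpos : (0:ℝ) < (2 + Real.sqrt 3) / c := by positivity
  have hr1 : 1 < (2 + Real.sqrt 3) / c := (one_lt_div hc0).2 hcu
  have hlogpos : 0 < Real.log ((2 + Real.sqrt 3) / c) := Real.log_pos hr1
  have ht1pos : 0 < t₁ := by
    have := hlogpos
    rw [ht₁, hratio]
    positivity
  refine ⟨ht1pos, ?_, ?_⟩
  · intro t ht
    obtain ⟨ht0, htlt⟩ := ht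
    have hulo : 1 < u t := by
      have he : (1:ℝ) < Real.exp (τ * t) := by
        have : Real.exp 0 < Real.exp (τ * t) := Real.exp_lt_exp.2 (by positivity)
        simpa using this
      have : c * 1 < c * Real.exp (τ * t) := by
        exact mul_lt_mul_of_pos_left he hc0
      simp only [hu]; nlinarith
    have huhi : u t < 2 + Real.sqrt 3 := by
      have hτt : τ * t < τ * t₁ := mul_lt_mul_of_pos_left htlt hτ0
      rw [ht1v] at hτt
      have he : Real.exp (τ * t) < (2 + Real.sqrt 3) / c := by
        calc Real.exp (τ * t) < Real.exp (Real.log ((2 + Real.sqrt 3) / c)) :=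
              Real.exp_lt_exp.2 hτt
          _ = (2 + Real.sqrt 3) / c := Real.exp_log hrpos
      have := mul_lt_mul_of_pos_left he hc0
      rw [mul_div_cancel₀ _ hc0.ne'] at this
      simpa [hu] using this
    have hquad : u t ^ 2 - 4 * u t + 1 < 0 := by
      have h1 : 0 < u t - (2 - Real.sqrt 3) := by nlinarith
      have h2 : 0 < (2 + Real.sqrt 3) - u t := by linarith
      nlinarith [mul_pos h1 h2]
    rw [hd3]
    have hden : (0:ℝ) < (u t + 1) ^ 4 := by positivity
    have hnum : u t * (u t ^ 2 - 4 * u t + 1) < 0 :=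
      mul_neg_of_pos_of_neg (hupos t) hquad
    have hfrac : u t * (u t ^ 2 - 4 * u t + 1) / (u t + 1) ^ 4 < 0 :=
      div_neg_of_neg_of_pos hnum hden
    have hcoef : (0:ℝ) < τ ^ 4 / β := by positivity
    simpa [hD3] using mul_neg_of_pos_of_neg hcoef hfrac
  · intro t htlt
    have huhi : 2 + Real.sqrt 3 < u t := by
      have hτt : τ * t₁ < τ * t := mul_lt_mul_of_pos_left htlt hτ0
      rw [ht1v] at hτt
      have he : (2 + Real.sqrt 3) / c < Real.exp (τ * t) := by
        calc (2 + Real.sqrt 3) / c = Real.exp (Real.log ((2 + Real.sqrt 3) / c)) :=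
              (Real.exp_log hrpos).symm
          _ < Real.exp (τ * t) := Real.exp_lt_exp.2 hτt
      have := mul_lt_mul_of_pos_left he hc0
      rw [mul_div_cancel₀ _ hc0.ne'] at this
      simpa [hu] using this
    have hquad : 0 < u t ^ 2 - 4 * u t + 1 := by
      have h1 : 0 < u t - (2 + Real.sqrt 3) := by linarith
      have h2 : 0 < u t - (2 - Real.sqrt 3) := by nlinarith
      nlinarith [mul_pos h1 h2]
    rw [hd3]
    have hden : (0:ℝ) < (u t + 1) ^ 4 := by positivity
    have hnum : 0 < u t * (u t ^ 2 - 4 * u t + 1) := mul_pos (hupos t) hquad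
    have hcoef : (0:ℝ) < τ ^ 4 / β := by positivity
    have : 0 < u t * (u t ^ 2 - 4 * u t + 1) / (u t + 1) ^ 4 := div_pos hnum hden
    simpa [hD3] using mul_pos hcoef this
end

section
/- If α < (2−√3)·βqN, then with t₂ = (1/τ)·ln((2−√3)βqN/α), t' = (1/τ)·ln(βqN/α), t₁ = (1/τ)·ln((2+√3)βqN/α), we have 0 < t₂ < t' < t₁, x'''(t) > 0 on (0, t₂), x'''(t) < 0 on (t₂, t₁), x'''(t) > 0 on (t₁, ∞), x''(t) > 0 on (0, t'), and x''(t) < 0 on (t', ∞). -/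
open Real Filter Set


set_option maxHeartbeats 1000000 in
theorem stmt_11 (N α β q τ : ℝ) (hN : 0 < N) (hα : 0 < α) (hβ : 0 < β) (hq : 0 < q)
    (hτ : τ = α + β * q * N)
    (g x : ℝ → ℝ)
    (hg : ∀ t, g t = (α / (β * q * N)) * Real.exp (τ * t))
    (hx : ∀ t, x t = (q * N * g t - α / β) / (g t + 1))
    (hcase : α < (2 - Real.sqrt 3) * (β * q * N))
    (t₂ t' t₁ : ℝ)
    (ht₂ : t₂ = (1 / τ) * Real.log ((2 - Real.sqrt 3) * (β * q * N) / α))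
    (ht' : t' = (1 / τ) * Real.log (β * q * N / α))
    (ht₁ : t₁ = (1 / τ) * Real.log ((2 + Real.sqrt 3) * (β * q * N) / α)) :
    0 < t₂ ∧ t₂ < t' ∧ t' < t₁ ∧
    (∀ t : ℝ, t ∈ Ioo 0 t₂ → 0 < deriv (deriv (deriv x)) t) ∧
    (∀ t : ℝ, t ∈ Ioo t₂ t₁ → deriv (deriv (deriv x)) t < 0) ∧
    (∀ t : ℝ, t₁ < t → 0 < deriv (deriv (deriv x)) t) ∧
    (∀ t : ℝ, t ∈ Ioo 0 t' → 0 < deriv (deriv x) t) ∧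
    (∀ t : ℝ, t' < t → deriv (deriv x) t < 0) := by
  have hβqN : 0 < β * q * N := by positivity
  have hτpos : 0 < τ := by rw [hτ]; positivity
  set s := Real.sqrt 3 with hs
  have hs2 : s ^ 2 = 3 := Real.sq_sqrt (by norm_num)
  have hs0 : 0 ≤ s := Real.sqrt_nonneg 3
  have hs1 : 1 < s := by nlinarith
  have hslt2 : s < 2 := by nlinarith
  set A := α / (β * q * N) with hA
  have hApos : 0 < A := by positivity
  have hAlt : A < 2 - s := by rw [hA, div_lt_iff₀ hβqN]; linarith [hcase]
  set u : ℝ → ℝ := fun t => A * Real.exp (τ * t) with hu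
  have hupos : ∀ t, 0 < u t := fun t => by simp only [hu]; positivity
  have hu1 : ∀ t, (0:ℝ) < u t + 1 := fun t => by have := hupos t; linarith
  have hu1' : ∀ t, u t + 1 ≠ 0 := fun t => ne_of_gt (hu1 t)
  -- rewrite x
  have hxf : x = fun t => q * N - (τ / β) * (u t + 1)⁻¹ := by
    funext t
    rw [hx t, hg t]
    have h1 : u t + 1 ≠ 0 := hu1' t
    simp only [hu, hA] at h1 ⊢
    field_simp
    rw [hτ]; ring
  -- derivative of u
  have hud : ∀ t, HasDerivAt u (τ * u t) t := by
    intro t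
    have h1 : HasDerivAt (fun r : ℝ => τ * r) τ t := by
      simpa using (hasDerivAt_id t).const_mul τ
    have h2 := (Real.hasDerivAt_exp (τ * t)).comp t h1
    have h3 := h2.const_mul A
    refine h3.congr_deriv ?_
    simp only [hu]; ring
  -- first derivative of x
  have hd1 : ∀ t, HasDerivAt x (τ ^ 2 / β * u t / (u t + 1) ^ 2) t := by
    intro t
    rw [hxf]
    have h1 : HasDerivAt (fun r => u r + 1) (τ * u t) t := (hud t).add_const 1
    have h2 := h1.inv (hu1' t)
    have h3 := (hasDerivAt_const t (q * N)).sub (h2.const_mul (τ / β))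
    refine h3.congr_deriv ?_
    field_simp
    ring
  -- second derivative
  have hd2 : ∀ t, HasDerivAt (fun r => τ ^ 2 / β * u r / (u r + 1) ^ 2)
      (τ ^ 3 / β * (u t * (1 - u t)) / (u t + 1) ^ 3) t := by
    intro t
    have h1 : HasDerivAt (fun r => u r + 1) (τ * u t) t := (hud t).add_const 1
    have hnum : HasDerivAt (fun r => τ ^ 2 / β * u r) (τ ^ 2 / β * (τ * u t)) t :=
      (hud t).const_mul _
    have hden : HasDerivAt (fun r => (u r + 1) ^ 2)
        ((2 : ℕ) * (u t + 1) ^ (2 - 1) * (τ * u t)) t := h1.pow 2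
    have h3 := hnum.div hden (pow_ne_zero 2 (hu1' t))
    refine h3.congr_deriv ?_
    have := hu1' t
    field_simp
    ring
  -- third derivative
  have hd3 : ∀ t, HasDerivAt (fun r => τ ^ 3 / β * (u r * (1 - u r)) / (u r + 1) ^ 3)
      (τ ^ 4 / β * (u t * ((u t) ^ 2 - 4 * u t + 1)) / (u t + 1) ^ 4) t := by
    intro t
    have h1 : HasDerivAt (fun r => u r + 1) (τ * u t) t := (hud t).add_const 1
    have hnum : HasDerivAt (fun r => τ ^ 3 / β * (u r * (1 - u r)))
        (τ ^ 3 / β * ((τ * u t) * (1 - u t) + u t * (-(τ * u t)))) t := by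
      have h0 := ((hud t).mul ((hasDerivAt_const t (1:ℝ)).sub (hud t))).const_mul (τ ^ 3 / β)
      refine h0.congr_deriv ?_
      simp only [Pi.sub_apply]
      ring
    have hden : HasDerivAt (fun r => (u r + 1) ^ 3)
        ((3 : ℕ) * (u t + 1) ^ (3 - 1) * (τ * u t)) t := h1.pow 3
    have h3 := hnum.div hden (pow_ne_zero 3 (hu1' t))
    refine h3.congr_deriv ?_
    have := hu1' t
    field_simp
    ring
  -- deriv identities
  have e1 : deriv x = fun r => τ ^ 2 / β * u r / (u r + 1) ^ 2 :=
    funext fun t => (hd1 t).deriv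
  have e2 : deriv (deriv x) = fun r => τ ^ 3 / β * (u r * (1 - u r)) / (u r + 1) ^ 3 := by
    rw [e1]; exact funext fun t => (hd2 t).deriv
  have e3 : deriv (deriv (deriv x)) =
      fun r => τ ^ 4 / β * (u r * ((u r) ^ 2 - 4 * u r + 1)) / (u r + 1) ^ 4 := by
    rw [e2]; exact funext fun t => (hd3 t).deriv
  -- values of u at key times
  have hval : ∀ c : ℝ, 0 < c → u ((1 / τ) * Real.log (c * (β * q * N) / α)) = c := by
    intro c hc
    have harg : 0 < c * (β * q * N) / α := by positivity
    have hlog : τ * (1 / τ * Real.log (c * (β * q * N) / α))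
        = Real.log (c * (β * q * N) / α) := by
      field_simp
    simp only [hu, hlog, Real.exp_log harg, hA]
    field_simp
  have hut2 : u t₂ = 2 - s := by rw [ht₂]; exact hval _ (by linarith)
  have hut1 : u t₁ = 2 + s := by rw [ht₁]; exact hval _ (by linarith)
  have hut' : u t' = 1 := by
    have h : β * q * N / α = 1 * (β * q * N) / α := by ring
    rw [ht', h]; exact hval 1 one_pos
  have hu0 : u 0 = A := by simp [hu]
  -- monotonicity
  have hmono : StrictMono u := by
    intro a b hab
    simp only [hu]
    exact mul_lt_mul_of_pos_left (Real.exp_lt_exp.mpr ((mul_lt_mul_iff_right₀ hτpos).mpr hab)) hApos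
  have h0t2 : 0 < t₂ := hmono.lt_iff_lt.mp (by rw [hu0, hut2]; exact hAlt)
  have ht2t' : t₂ < t' := hmono.lt_iff_lt.mp (by rw [hut2, hut']; linarith)
  have ht't1 : t' < t₁ := hmono.lt_iff_lt.mp (by rw [hut', hut1]; linarith)
  clear_value u A s
  have hc4 : 0 < τ ^ 4 / β := div_pos (pow_pos hτpos 4) hβ
  have hc3 : 0 < τ ^ 3 / β := div_pos (pow_pos hτpos 3) hβ
  refine ⟨h0t2, ht2t', ht't1, ?_, ?_, ?_, ?_, ?_⟩
  · intro t ht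
    rw [e3]
    beta_reduce
    have h1 : u t < 2 - s := by rw [← hut2]; exact hmono ht.2
    have hQ : 0 < (u t) ^ 2 - 4 * u t + 1 := by
      nlinarith [mul_pos (by linarith [hupos t] : (0:ℝ) < 2 - s - u t) (by linarith : (0:ℝ) < 2 + s - u t), hs2]
    exact div_pos (mul_pos hc4 (mul_pos (hupos t) hQ)) (pow_pos (hu1 t) 4)
  · intro t ht
    rw [e3]
    beta_reduce
    have h1 : 2 - s < u t := by rw [← hut2]; exact hmono ht.1
    have h2 : u t < 2 + s := by rw [← hut1]; exact hmono ht.2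
    have hQ : (u t) ^ 2 - 4 * u t + 1 < 0 := by
      nlinarith [mul_pos (by linarith : (0:ℝ) < u t - (2 - s)) (by linarith : (0:ℝ) < 2 + s - u t), hs2]
    exact div_neg_of_neg_of_pos
      (mul_neg_of_pos_of_neg hc4 (mul_neg_of_pos_of_neg (hupos t) hQ))
      (pow_pos (hu1 t) 4)
  · intro t ht
    rw [e3]
    beta_reduce
    have h1 : 2 + s < u t := by rw [← hut1]; exact hmono ht
    have hQ : 0 < (u t) ^ 2 - 4 * u t + 1 := by nlinarith
    exact div_pos (mul_pos hc4 (mul_pos (hupos t) hQ)) (pow_pos (hu1 t) 4)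
  · intro t ht
    rw [e2]
    beta_reduce
    have h1 : u t < 1 := by rw [← hut']; exact hmono ht.2
    exact div_pos (mul_pos hc3 (mul_pos (hupos t) (by linarith))) (pow_pos (hu1 t) 3)
  · intro t ht
    rw [e2]
    beta_reduce
    have h1 : 1 < u t := by rw [← hut']; exact hmono ht
    exact div_neg_of_neg_of_pos
      (mul_neg_of_pos_of_neg hc3 (mul_neg_of_pos_of_neg (hupos t) (by linarith)))
      (pow_pos (hu1 t) 3)
end

section
/- If α < βqN, then x'(t) attains its unique global maximum over [0, ∞) at t' = (1/τ)·ln(βqN/α), and the maximum value is x'(t') = τ²/(4β). -/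
open Real Filter Set


theorem stmt_12 (N α β q τ : ℝ) (hN : 0 < N) (hα : 0 < α) (hβ : 0 < β) (hq : 0 < q)
    (hτ : τ = α + β * q * N)
    (g x : ℝ → ℝ)
    (hg : ∀ t, g t = (α / (β * q * N)) * Real.exp (τ * t))
    (hx : ∀ t, x t = (q * N * g t - α / β) / (g t + 1))
    (hcase : α < β * q * N)
    (t' : ℝ) (ht' : t' = (1 / τ) * Real.log (β * q * N / α)) :
    (∀ t : ℝ, 0 ≤ t → t ≠ t' → deriv x t < deriv x t') ∧
    deriv x t' = τ ^ 2 / (4 * β) := by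
  have hβqN : 0 < β * q * N := by positivity
  have hτpos : 0 < τ := by rw [hτ]; positivity
  set c : ℝ := α / (β * q * N) with hc
  have hcpos : 0 < c := by positivity
  -- x as explicit function
  have hxe : x = fun t => (q * N * (c * Real.exp (τ * t)) - α / β) /
      (c * Real.exp (τ * t) + 1) := by
    funext t; rw [hx t, hg t]
  -- derivative formula
  have hderiv : ∀ t : ℝ, deriv x t =
      τ ^ 2 / β * (c * Real.exp (τ * t)) / (c * Real.exp (τ * t) + 1) ^ 2 := by
    intro t
    set e := Real.exp (τ * t) with he
    have hepos : 0 < e := Real.exp_pos _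
    have hden : c * e + 1 ≠ 0 := by positivity
    have h1 : HasDerivAt (fun s : ℝ => c * Real.exp (τ * s)) (c * (Real.exp (τ * t) * τ)) t := by
      have := ((hasDerivAt_id t).const_mul τ).exp.const_mul c
      simpa [id, mul_comm, mul_assoc, mul_left_comm] using this
    have h2 : HasDerivAt (fun s : ℝ => q * N * (c * Real.exp (τ * s)) - α / β)
        (q * N * (c * (Real.exp (τ * t) * τ))) t := by
      exact ((h1.const_mul (q * N)).sub_const (α / β))
    have h3 : HasDerivAt (fun s : ℝ => c * Real.exp (τ * s) + 1)
        (c * (Real.exp (τ * t) * τ)) t := h1.add_const 1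
    have h4 := h2.div h3 hden
    rw [hxe, (show HasDerivAt (fun s : ℝ => (q * N * (c * Real.exp (τ * s)) - α / β) / (c * Real.exp (τ * s) + 1)) _ t from h4).deriv, ← he]
    have hβ' : β ≠ 0 := ne_of_gt hβ
    field_simp
    rw [hτ]; ring
  -- value at t'
  have hut' : c * Real.exp (τ * t') = 1 := by
    have : τ * t' = Real.log (β * q * N / α) := by
      rw [ht']; field_simp
    rw [this, Real.exp_log (by positivity)]
    rw [hc]; field_simp
  have hval : deriv x t' = τ ^ 2 / (4 * β) := by
    rw [hderiv t', hut']
    ring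
  refine ⟨fun t _ hne => ?_, hval⟩
  rw [hval, hderiv t]
  set u := c * Real.exp (τ * t) with hu
  have hupos : 0 < u := by positivity
  have hune : u ≠ 1 := by
    intro h
    apply hne
    have hexp : Real.exp (τ * t) = Real.exp (τ * t') := by
      have h2 : Real.exp (τ * t) = 1 / c := by
        field_simp at h ⊢; linarith [h]
      have h3 : Real.exp (τ * t') = 1 / c := by
        have := hut'
        field_simp at this ⊢; linarith [this]
      rw [h2, h3]
    have := Real.exp_injective hexp
    have hτne : τ ≠ 0 := ne_of_gt hτpos
    field_simp at this
    linarith [this]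
  have hkey : u / (u + 1) ^ 2 < 1 / 4 := by
    rw [div_lt_div_iff₀ (by positivity) (by norm_num)]
    nlinarith [sq_nonneg (u - 1), sq_pos_of_ne_zero (sub_ne_zero.mpr hune)]
  calc τ ^ 2 / β * u / (u + 1) ^ 2 = τ ^ 2 / β * (u / (u + 1) ^ 2) := by ring
    _ < τ ^ 2 / β * (1 / 4) := by
        apply mul_lt_mul_of_pos_left hkey (by positivity)
    _ = τ ^ 2 / (4 * β) := by ring
end

section
/- If α ≥ βqN, then x'(t) attains its global maximum over [0, ∞) at t = 0, with x'(0) = τ²·(α/(βqN))/(β·(α/(βqN)+1)²) = α·q·N. -/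
open Real Filter Set


theorem stmt_13 (N α β q τ : ℝ) (hN : 0 < N) (hα : 0 < α) (hβ : 0 < β) (hq : 0 < q)
    (hτ : τ = α + β * q * N)
    (g x : ℝ → ℝ)
    (hg : ∀ t, g t = (α / (β * q * N)) * Real.exp (τ * t))
    (hx : ∀ t, x t = (q * N * g t - α / β) / (g t + 1))
    (hcase : β * q * N ≤ α) :
    IsMaxOn (deriv x) (Ici (0 : ℝ)) 0 ∧
    deriv x 0 = τ ^ 2 * (α / (β * q * N)) / (β * (α / (β * q * N) + 1) ^ 2) ∧
    deriv x 0 = α * q * N := by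
  have hbqN : 0 < β * q * N := by positivity
  have hbqN' : β * q * N ≠ 0 := ne_of_gt hbqN
  have hτpos : 0 < τ := by rw [hτ]; positivity
  have hgpos : ∀ t, 0 < g t := by
    intro t; rw [hg]; positivity
  have hgd : ∀ t, HasDerivAt g (τ * g t) t := by
    intro t
    have h1 : HasDerivAt (fun s : ℝ => τ * s) τ t := by
      simpa using (hasDerivAt_id t).const_mul τ
    have h2 : HasDerivAt (fun y => α / (β * q * N) * Real.exp (τ * y)) (α / (β * q * N) * (Real.exp (τ * t) * τ)) t :=
      (h1.exp).const_mul (α / (β * q * N))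
    have hgf : g = fun s => (α / (β * q * N)) * Real.exp (τ * s) := funext hg
    rw [hgf]
    convert h2 using 1
    ring
  have hxd : ∀ t, HasDerivAt x (τ ^ 2 * g t / (β * (g t + 1) ^ 2)) t := by
    intro t
    have hden : g t + 1 ≠ 0 := by have := hgpos t; positivity
    have hnum : HasDerivAt (fun s => q * N * g s - α / β) (q * N * (τ * g t)) t :=
      ((hgd t).const_mul (q * N)).sub_const _
    have hden' : HasDerivAt (fun s => g s + 1) (τ * g t) t := (hgd t).add_const 1
    have h : HasDerivAt (fun y => (q * N * g y - α / β) / (g y + 1))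
        ((q * N * (τ * g t) * (g t + 1) - (q * N * g t - α / β) * (τ * g t)) / (g t + 1) ^ 2) t :=
      hnum.div hden' hden
    have hxf : x = fun s => (q * N * g s - α / β) / (g s + 1) := funext hx
    rw [hxf]
    convert h using 1
    have hg1 : (0:ℝ) < g t + 1 := by have := hgpos t; linarith
    field_simp
    rw [hτ]; ring
  have hderiv : ∀ t, deriv x t = τ ^ 2 * g t / (β * (g t + 1) ^ 2) := fun t => (hxd t).deriv
  have hg0 : g 0 = α / (β * q * N) := by
    rw [hg]; simp
  have ha1 : (1:ℝ) ≤ g 0 := by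
    rw [hg0]
    rw [le_div_iff₀ hbqN]; linarith
  constructor
  · rw [isMaxOn_iff]
    intro t ht
    rw [hderiv, hderiv]
    have hmono : g 0 ≤ g t := by
      rw [hg, hg]
      have : Real.exp (τ * 0) ≤ Real.exp (τ * t) := by
        apply Real.exp_le_exp.2
        have : (0:ℝ) ≤ t := ht
        nlinarith
      have ha : 0 < α / (β * q * N) := by positivity
      nlinarith
    set u := g t with hu
    set v := g 0 with hv
    have hupos := hgpos t
    have hvpos := hgpos 0
    rw [div_le_div_iff₀ (by positivity) (by positivity)]
    have huv1 : 1 ≤ u * v := by nlinarith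
    nlinarith [mul_nonneg (mul_nonneg hβ.le (sq_nonneg τ))
      (mul_nonneg (sub_nonneg.2 hmono) (sub_nonneg.2 huv1))]
  constructor
  · rw [hderiv, hg0]
  · rw [hderiv, hg0, hτ]
    field_simp
end
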